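/- If u_I and u_II both solve the parabolic obstacle problem: u̇_i(t) − Au_i(t) − f ≥ 0 in H⁻¹, (u_i(t) − u₀, u̇_i(t) − Au_i(t) − f) = 0, u_i(0) = u₀, u_i(t) ≥ u₀ for a.e. t ∈ (0,T), with f ∈ L² time-independent and u_i ∈ H¹(0,T;L²) ∩ L^∞(0,T;H¹₀), then u_I = u_II. -/

import Mathlib

open MeasureTheory

set_option maxHeartbeats 1000000

section Aux
open Set


variable {E : Type*} [NormedAddCommGroup E] [InnerProductSpace ℝ E] [CompleteSpace E]

lemma sq_norm_setIntegral (D : ℝ → E) (t : ℝ)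
    (hm : AEStronglyMeasurable D (volume.restrict (Ioc 0 t)))
    (hi : Integrable (fun s => ‖D s‖ ^ 2) (volume.restrict (Ioc 0 t))) :
    ‖∫ s in Ioc (0:ℝ) t, D s‖ ^ 2
      = 2 * ∫ s in Ioc (0:ℝ) t, (inner ℝ (D s) (∫ r in Ioc (0:ℝ) s, D r) : ℝ) := by
  set ν := volume.restrict (Ioc (0:ℝ) t) with hν
  have hDi : Integrable D ν := by
    refine Integrable.mono' ((integrable_const 1).add hi) hm ?_
    filter_upwards with s
    have : ‖D s‖ ≤ 1 + ‖D s‖ ^ 2 := by nlinarith [sq_nonneg (‖D s‖ - 1)]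
    simpa using this
  -- the kernel
  set k : ℝ → ℝ → ℝ := fun s r => (inner ℝ (D s) (D r) : ℝ) with hk
  have hKm : AEStronglyMeasurable (fun p : ℝ × ℝ => k p.1 p.2) (ν.prod ν) :=
    hm.comp_fst.inner hm.comp_snd
  have hKi : Integrable (fun p : ℝ × ℝ => k p.1 p.2) (ν.prod ν) := by
    refine Integrable.mono' (hDi.norm.mul_prod hDi.norm) hKm ?_
    filter_upwards with p
    simpa [hk] using norm_inner_le_norm (𝕜 := ℝ) (D p.1) (D p.2)
  -- Step A : ‖∫ D‖² as a double integral
  set y := ∫ s, D s ∂ν with hy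
  have hA : ‖y‖ ^ 2 = ∫ s, ∫ r, k s r ∂ν ∂ν := by
    have h1 : ‖y‖ ^ 2 = (inner ℝ y y : ℝ) := (real_inner_self_eq_norm_sq y).symm
    have h2 : (inner ℝ y y : ℝ) = ∫ s, (inner ℝ y (D s) : ℝ) ∂ν := by
      have := (innerSL ℝ y).integral_comp_comm hDi
      simpa [hy] using this.symm
    have h3 : ∀ s, (inner ℝ y (D s) : ℝ) = ∫ r, k s r ∂ν := by
      intro s
      rw [real_inner_comm]
      have := (innerSL ℝ (D s)).integral_comp_comm hDi
      simpa [hy, hk] using this.symm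
    rw [h1, h2]
    exact integral_congr_ae (Filter.Eventually.of_forall fun s => h3 s)
  -- the triangle kernels
  set Gc : ℝ → ℝ → ℝ := fun s r => if r ≤ s then k s r else 0 with hGc
  set Hc : ℝ → ℝ → ℝ := fun s r => if s < r then k s r else 0 with hHc
  set Gc' : ℝ → ℝ → ℝ := fun s r => if r < s then k r s else 0 with hGc'
  have hGeq : (fun p : ℝ × ℝ => Gc p.1 p.2)
      = {p : ℝ × ℝ | p.2 ≤ p.1}.indicator (fun p => k p.1 p.2) := by
    funext p; by_cases h : p.2 ≤ p.1 <;> simp [hGc, h, Set.indicator_apply]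
  have hHeq : (fun p : ℝ × ℝ => Hc p.1 p.2)
      = {p : ℝ × ℝ | p.1 < p.2}.indicator (fun p => k p.1 p.2) := by
    funext p; by_cases h : p.1 < p.2 <;> simp [hHc, h, Set.indicator_apply]
  have hG'eq : (fun p : ℝ × ℝ => Gc' p.1 p.2)
      = {p : ℝ × ℝ | p.2 < p.1}.indicator (fun p => k p.2 p.1) := by
    funext p; by_cases h : p.2 < p.1 <;> simp [hGc', h, Set.indicator_apply]
  have hsle : MeasurableSet {p : ℝ × ℝ | p.2 ≤ p.1} :=
    measurableSet_le measurable_snd measurable_fst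
  have hslt : MeasurableSet {p : ℝ × ℝ | p.1 < p.2} :=
    measurableSet_lt measurable_fst measurable_snd
  have hslt' : MeasurableSet {p : ℝ × ℝ | p.2 < p.1} :=
    measurableSet_lt measurable_snd measurable_fst
  have hGi : Integrable (fun p : ℝ × ℝ => Gc p.1 p.2) (ν.prod ν) := by
    rw [hGeq]; exact hKi.indicator hsle
  have hHi : Integrable (fun p : ℝ × ℝ => Hc p.1 p.2) (ν.prod ν) := by
    rw [hHeq]; exact hKi.indicator hslt
  have hKswapi : Integrable (fun p : ℝ × ℝ => k p.2 p.1) (ν.prod ν) := by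
    refine Integrable.mono' (hDi.norm.mul_prod hDi.norm) (hm.comp_snd.inner hm.comp_fst) ?_
    filter_upwards with p
    have := norm_inner_le_norm (𝕜 := ℝ) (D p.2) (D p.1)
    simpa [hk, mul_comm] using this
  have hG'i : Integrable (fun p : ℝ × ℝ => Gc' p.1 p.2) (ν.prod ν) := by
    rw [hG'eq]; exact hKswapi.indicator hslt'
  -- diagonal is null
  have hdiag : (ν.prod ν) {p : ℝ × ℝ | p.1 = p.2} = 0 := by
    have hms : MeasurableSet {p : ℝ × ℝ | p.1 = p.2} :=
      measurableSet_eq_fun measurable_fst measurable_snd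
    rw [Measure.prod_apply hms]
    have hfib : ∀ x : ℝ, ν (Prod.mk x ⁻¹' {p : ℝ × ℝ | p.1 = p.2}) = 0 := by
      intro x
      have hpre : Prod.mk x ⁻¹' {p : ℝ × ℝ | p.1 = p.2} = {x} := by
        ext z; simp [eq_comm]
      rw [hpre]
      exact le_antisymm (le_trans (Measure.restrict_le_self _) (by simp)) zero_le
    simp [hfib]
  have hae_ne : ∀ᵐ p ∂ν.prod ν, p.1 ≠ (p.2 : ℝ) := by
    rw [MeasureTheory.ae_iff]
    convert hdiag using 2
    simp
  -- swap : ∫ H = ∫ G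
  have hswap : ∫ p, Hc p.1 p.2 ∂ν.prod ν = ∫ p, Gc p.1 p.2 ∂ν.prod ν := by
    have h0 := integral_prod_swap (μ := ν) (ν := ν) (fun q : ℝ × ℝ => Gc' q.1 q.2)
    have h1 : ∫ p, Hc p.1 p.2 ∂ν.prod ν
        = ∫ z, (fun q : ℝ × ℝ => Gc' q.1 q.2) z.swap ∂ν.prod ν := by
      refine integral_congr_ae (Filter.Eventually.of_forall fun p => ?_)
      rfl
    rw [h1, h0]
    refine integral_congr_ae ?_
    filter_upwards [hae_ne] with p hp
    rcases lt_trichotomy p.2 p.1 with h | h | h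
    · simp only [hGc, hGc', if_pos h, if_pos h.le]
      exact real_inner_comm _ _
    · exact absurd h.symm hp
    · simp [hGc, hGc', not_le.mpr h, not_lt.mpr h.le]
  -- K = G + H pointwise
  have hKGH : ∫ p, k p.1 p.2 ∂ν.prod ν = 2 * ∫ p, Gc p.1 p.2 ∂ν.prod ν := by
    have hsum : (fun p : ℝ × ℝ => k p.1 p.2)
        = fun p => Gc p.1 p.2 + Hc p.1 p.2 := by
      funext p
      rcases le_or_gt p.2 p.1 with h | h
      · simp [hGc, hHc, h, not_lt.mpr h]
      · simp [hGc, hHc, not_le.mpr h, h]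
    rw [hsum, integral_add hGi hHi, hswap]; ring
  -- iterated integral of G is the RHS
  have hGi' : Integrable (Function.uncurry Gc) (ν.prod ν) := by
    exact hGi
  have hKi' : Integrable (Function.uncurry k) (ν.prod ν) := by
    exact hKi
  have hE : ∫ s, ∫ r, Gc s r ∂ν ∂ν
      = ∫ s, (inner ℝ (D s) (∫ r in Ioc (0:ℝ) s, D r) : ℝ) ∂ν := by
    refine setIntegral_congr_ae measurableSet_Ioc ?_
    filter_upwards with s hs
    have h1 : ∫ r, Gc s r ∂ν = ∫ r, (Iic s).indicator (fun r => k s r) r ∂ν := by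
      refine integral_congr_ae (Filter.Eventually.of_forall fun r => ?_)
      by_cases h : r ≤ s <;> simp [hGc, h, Set.indicator_apply]
    have h2 : ∫ r, (Iic s).indicator (fun r => k s r) r ∂ν = ∫ r in Iic s, k s r ∂ν :=
      integral_indicator measurableSet_Iic
    have h3 : ν.restrict (Iic s) = volume.restrict (Ioc (0:ℝ) s) := by
      rw [hν, Measure.restrict_restrict measurableSet_Iic]
      congr 1
      ext r
      simp only [mem_inter_iff, mem_Iic, mem_Ioc]
      constructor
      · rintro ⟨ha, hb, _⟩; exact ⟨hb, ha⟩
      · rintro ⟨ha, hb⟩; exact ⟨hb, ha, hb.trans hs.2⟩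
    have hsub : Integrable D (volume.restrict (Ioc (0:ℝ) s)) :=
      hDi.mono_measure (Measure.restrict_mono (Ioc_subset_Ioc le_rfl hs.2) le_rfl)
    have h4 : (inner ℝ (D s) (∫ r in Ioc (0:ℝ) s, D r) : ℝ) = ∫ r in Ioc (0:ℝ) s, k s r := by
      have := (innerSL ℝ (D s)).integral_comp_comm hsub
      simpa [hk] using this.symm
    rw [h1, h2, h3, h4]
  calc ‖y‖ ^ 2 = ∫ s, ∫ r, k s r ∂ν ∂ν := hA
    _ = ∫ p, k p.1 p.2 ∂ν.prod ν := by
        have := integral_integral (μ := ν) (ν := ν) (f := k) hKi'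
        simpa using this
    _ = 2 * ∫ p, Gc p.1 p.2 ∂ν.prod ν := hKGH
    _ = 2 * ∫ s, ∫ r, Gc s r ∂ν ∂ν := by
        have := integral_integral (μ := ν) (ν := ν) (f := Gc) hGi'
        rw [this]
    _ = _ := by rw [hE]

end Aux


/-- A solution of the parabolic obstacle problem with obstacle `u₀`:
`u ∈ H¹(0,T;L²) ∩ L^∞(0,T;H¹₀)` with (distributional) time derivative `du`, satisfying for
a.e. `t ∈ (0,T)`: `u̇ − Au − f ≥ 0` in `H⁻¹` (i.e. `⟨u̇, φ⟩ + a(u,φ) − ⟨f,φ⟩ ≥ 0` for all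
`φ ≥ 0` in `H¹₀`), `(u − u₀, u̇ − Au − f) = 0`, `u ≥ u₀`, together with `u(0) = u₀`.
`H¹₀` is a normed space `V` embedded in `L²` by `ι`. -/
def IsObstacleSolution {α : Type*} [MeasurableSpace α] (μ : Measure α)
    {V : Type*} [NormedAddCommGroup V] [NormedSpace ℝ V]
    (ι : V →L[ℝ] Lp ℝ 2 μ) (a : V →L[ℝ] V →L[ℝ] ℝ) (f : Lp ℝ 2 μ)
    (T : ℝ) (u₀ : V) (u : ℝ → V) (du : ℝ → Lp ℝ 2 μ) : Prop :=
  u 0 = u₀ ∧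
  (∀ t ∈ Set.Icc (0:ℝ) T, ι (u t) = ι u₀ + ∫ s in (0:ℝ)..t, du s) ∧
  AEStronglyMeasurable u (volume.restrict (Set.Ioc 0 T)) ∧
  (∃ M : ℝ, ∀ t ∈ Set.Icc (0:ℝ) T, ‖u t‖ ≤ M) ∧
  AEStronglyMeasurable du (volume.restrict (Set.Ioc 0 T)) ∧
  IntervalIntegrable (fun t => ‖du t‖ ^ 2) volume 0 T ∧
  (∀ᵐ t ∂(volume.restrict (Set.Ioo 0 T)),
    (∀ φ : V, 0 ≤ ι φ →
      0 ≤ (inner ℝ (du t) (ι φ) : ℝ) + a (u t) φ - (inner ℝ f (ι φ) : ℝ)) ∧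
    ((inner ℝ (du t) (ι (u t) - ι u₀) : ℝ) + a (u t) (u t - u₀) -
        (inner ℝ f (ι (u t) - ι u₀) : ℝ) = 0) ∧
    ι u₀ ≤ ι (u t))

open Set

/-- Uniqueness for the parabolic obstacle problem (time-independent datum `f ∈ L²`): two
solutions with the same initial datum and obstacle `u₀` coincide on `[0,T]`.  The bilinear
form `a` is coercive, continuous and symmetric, and `ι : H¹₀ ↪ L²` is injective. -/
theorem obstacle_problem_uniqueness
    {α : Type*} [MeasurableSpace α] (μ : Measure α)
    {V : Type*} [NormedAddCommGroup V] [NormedSpace ℝ V]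
    (ι : V →L[ℝ] Lp ℝ 2 μ) (hι : Function.Injective ι)
    (a : V →L[ℝ] V →L[ℝ] ℝ) (hsymm : ∀ u v : V, a u v = a v u)
    (c : ℝ) (hc : 0 < c) (hcoer : ∀ w : V, c * ‖w‖ ^ 2 ≤ a w w)
    (f : Lp ℝ 2 μ) (T : ℝ) (hT : 0 < T) (u₀ : V)
    (uI uII : ℝ → V) (duI duII : ℝ → Lp ℝ 2 μ)
    (hI : IsObstacleSolution μ ι a f T u₀ uI duI)
    (hII : IsObstacleSolution μ ι a f T u₀ uII duII) :
    ∀ t ∈ Set.Icc (0:ℝ) T, uI t = uII t := by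
  obtain ⟨hI0, hIint, hImeas, ⟨MI, hMI⟩, hIdm, hIdsq, hIae⟩ := hI
  obtain ⟨hII0, hIIint, hIImeas, ⟨MII, hMII⟩, hIIdm, hIIdsq, hIIae⟩ := hII
  set D : ℝ → Lp ℝ 2 μ := fun s => duI s - duII s with hD
  -- integrability of the derivatives on (0, T]
  have hsqI : IntegrableOn (fun s => ‖duI s‖ ^ 2) (Ioc 0 T) volume := hIdsq.1
  have hsqII : IntegrableOn (fun s => ‖duII s‖ ^ 2) (Ioc 0 T) volume := hIIdsq.1
  have hIOn : IntegrableOn duI (Ioc 0 T) volume := by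
    refine Integrable.mono' ((integrable_const 1).add hsqI) hIdm ?_
    filter_upwards with s
    have : ‖duI s‖ ≤ 1 + ‖duI s‖ ^ 2 := by nlinarith [sq_nonneg (‖duI s‖ - 1)]
    simpa using this
  have hIIOn : IntegrableOn duII (Ioc 0 T) volume := by
    refine Integrable.mono' ((integrable_const 1).add hsqII) hIIdm ?_
    filter_upwards with s
    have : ‖duII s‖ ≤ 1 + ‖duII s‖ ^ 2 := by nlinarith [sq_nonneg (‖duII s‖ - 1)]
    simpa using this
  have hDm : AEStronglyMeasurable D (volume.restrict (Ioc 0 T)) := hIdm.sub hIIdm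
  have hDsq : IntegrableOn (fun s => ‖D s‖ ^ 2) (Ioc 0 T) volume := by
    refine Integrable.mono' ((hsqI.add hsqII).const_mul 2) ?_ ?_
    · have : AEStronglyMeasurable (fun s => ‖D s‖ * ‖D s‖)
          (volume.restrict (Ioc 0 T)) := hDm.norm.mul hDm.norm
      simpa [pow_two] using this
    · filter_upwards with s
      have h1 : ‖D s‖ ≤ ‖duI s‖ + ‖duII s‖ := norm_sub_le _ _
      have h2 : ‖D s‖ * ‖D s‖ ≤ (‖duI s‖ + ‖duII s‖) * (‖duI s‖ + ‖duII s‖) :=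
        mul_le_mul h1 h1 (norm_nonneg _) (by positivity)
      have : ‖D s‖ ^ 2 ≤ 2 * (‖duI s‖ ^ 2 + ‖duII s‖ ^ 2) := by
        nlinarith [h2, sq_nonneg (‖duI s‖ - ‖duII s‖)]
      simpa using this
  -- the difference of the embedded solutions is the primitive of D
  have hWs : ∀ s ∈ Icc (0:ℝ) T, ι (uI s) - ι (uII s) = ∫ r in Ioc (0:ℝ) s, D r := by
    intro s hs
    have hsubI : IntervalIntegrable duI volume 0 s := by
      rw [intervalIntegrable_iff_integrableOn_Ioc_of_le hs.1]
      exact hIOn.mono_set (Ioc_subset_Ioc le_rfl hs.2)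
    have hsubII : IntervalIntegrable duII volume 0 s := by
      rw [intervalIntegrable_iff_integrableOn_Ioc_of_le hs.1]
      exact hIIOn.mono_set (Ioc_subset_Ioc le_rfl hs.2)
    rw [hIint s hs, hIIint s hs, add_sub_add_left_eq_sub,
      ← intervalIntegral.integral_sub hsubI hsubII, intervalIntegral.integral_of_le hs.1]
  -- the key pointwise inequality
  have hkey : ∀ᵐ s ∂(volume.restrict (Ioo 0 T)),
      (inner ℝ (D s) (ι (uI s) - ι (uII s)) : ℝ) ≤ 0 := by
    filter_upwards [hIae, hIIae] with s hsI hsII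
    obtain ⟨PI, EI, OI⟩ := hsI
    obtain ⟨PII, EII, OII⟩ := hsII
    have h1 := PI (uII s - u₀) (by rw [map_sub]; exact sub_nonneg.mpr OII)
    have h2 := PII (uI s - u₀) (by rw [map_sub]; exact sub_nonneg.mpr OI)
    have hw : (0:ℝ) ≤ a (uI s - uII s) (uI s - uII s) :=
      le_trans (by positivity) (hcoer _)
    simp only [hD, map_sub, ContinuousLinearMap.sub_apply, inner_sub_left,
      inner_sub_right] at h1 h2 EI EII hw ⊢
    linarith
  -- conclude
  intro t ht
  have hDm' : AEStronglyMeasurable D (volume.restrict (Ioc 0 t)) :=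
    hDm.mono_measure (Measure.restrict_mono (Ioc_subset_Ioc le_rfl ht.2) le_rfl)
  have hDsq' : Integrable (fun s => ‖D s‖ ^ 2) (volume.restrict (Ioc 0 t)) :=
    hDsq.mono_set (Ioc_subset_Ioc le_rfl ht.2)
  have hid := sq_norm_setIntegral D t hDm' hDsq'
  rw [← hWs t ht] at hid
  have hkey' : ∀ᵐ s ∂(volume.restrict (Ioc 0 t)),
      (inner ℝ (D s) (ι (uI s) - ι (uII s)) : ℝ) ≤ 0 := by
    have h0 : volume.restrict (Ioo (0:ℝ) T) = volume.restrict (Ioc 0 T) :=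
      Measure.restrict_congr_set Ioo_ae_eq_Ioc
    rw [h0] at hkey
    exact ae_restrict_of_ae_restrict_of_subset (Ioc_subset_Ioc le_rfl ht.2) hkey
  have hneg : (∫ s in Ioc (0:ℝ) t, (inner ℝ (D s) (∫ r in Ioc (0:ℝ) s, D r) : ℝ)) ≤ 0 := by
    refine integral_nonpos_of_ae ?_
    have hmem : ∀ᵐ s ∂(volume.restrict (Ioc (0:ℝ) t)), s ∈ Ioc (0:ℝ) t :=
      ae_restrict_mem measurableSet_Ioc
    filter_upwards [hkey', hmem] with s hs hsmem
    rw [← hWs s ⟨hsmem.1.le, hsmem.2.trans ht.2⟩]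
    exact hs
  have hzero : ι (uI t) - ι (uII t) = 0 := by
    have h2 : ‖ι (uI t) - ι (uII t)‖ ^ 2 ≤ 0 := by rw [hid]; linarith
    have := sq_nonneg ‖ι (uI t) - ι (uII t)‖
    have : ‖ι (uI t) - ι (uII t)‖ = 0 := by nlinarith [norm_nonneg (ι (uI t) - ι (uII t))]
    exact norm_eq_zero.mp this
  exact hι (sub_eq_zero.mp hzero)
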